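/- The map φ defined on cosets by φ(s_C·S_n) = Σ_{D ⊆ {1,…,n}} (-1)^{|C∩D|} D is an isomorphism of B_n-representations from the coset representation ℝ[B_n/S_n] to the direct sum ⊕_{i=0}^{n} V_n^i. -/

import Mathlib

abbrev Nn (n : ℕ) : Type := Multiplicative (Fin n → ZMod 2)

def permAddEquiv {n : ℕ} (π : Equiv.Perm (Fin n)) : (Fin n → ZMod 2) ≃+ (Fin n → ZMod 2) where
  toFun f := f ∘ π.symm
  invFun f := f ∘ π
  left_inv f := by funext i; simp
  right_inv f := by funext i; simp
  map_add' f g := rfl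

/-- `Sₙ` acting on `(C₂)ⁿ` by permuting coordinates. -/
def permAut (n : ℕ) : Equiv.Perm (Fin n) →* MulAut (Nn n) where
  toFun π := AddEquiv.toMultiplicative (permAddEquiv π)
  map_one' := by ext f; rfl
  map_mul' π ρ := by ext f; rfl

/-- The hyperoctahedral group `Bₙ = (C₂)ⁿ ⋊ Sₙ`. -/
abbrev Bn (n : ℕ) : Type := SemidirectProduct (Nn n) (Equiv.Perm (Fin n)) (permAut n)

/-- the diagonal element `s_A`, with `-1` exactly at positions in `A`. -/
def sgn {n : ℕ} (A : Finset (Fin n)) : Nn n :=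
  Multiplicative.ofAdd (fun i => if i ∈ A then (1 : ZMod 2) else 0)

namespace Stmt1Aux

open Finset

variable {n : ℕ}

noncomputable def χ (C D : Finset (Fin n)) : ℝ := (-1 : ℝ) ^ ((C ∩ D).card)

lemma chi_comm (C D : Finset (Fin n)) : χ C D = χ D C := by
  rw [χ, χ, Finset.inter_comm]

lemma card_symmDiff_aux (S T : Finset (Fin n)) :
    (symmDiff S T).card + 2 * (S ∩ T).card = S.card + T.card := by
  have h1 := Finset.card_sdiff_add_card_inter S T
  have h2 := Finset.card_sdiff_add_card_inter T S
  have h3 : (symmDiff S T).card = (S \ T).card + (T \ S).card := by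
    rw [symmDiff_def]
    exact Finset.card_union_of_disjoint disjoint_sdiff_sdiff
  rw [Finset.inter_comm T S] at h2
  omega

lemma chi_symmDiff (A B D : Finset (Fin n)) :
    χ (symmDiff A B) D = χ A D * χ B D := by
  have h1 : (symmDiff A B) ∩ D = symmDiff (A ∩ D) (B ∩ D) := inf_symmDiff_distrib_right A B D
  have h2 := card_symmDiff_aux (A ∩ D) (B ∩ D)
  rw [χ, χ, χ, h1, ← pow_add]
  calc (-1 : ℝ) ^ (symmDiff (A ∩ D) (B ∩ D)).card
      = (-1 : ℝ) ^ (symmDiff (A ∩ D) (B ∩ D)).card * ((-1 : ℝ) ^ 2) ^ ((A ∩ D) ∩ (B ∩ D)).card := by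
        norm_num
    _ = (-1 : ℝ) ^ ((symmDiff (A ∩ D) (B ∩ D)).card + 2 * ((A ∩ D) ∩ (B ∩ D)).card) := by
        rw [← pow_mul, ← pow_add]
    _ = (-1 : ℝ) ^ ((A ∩ D).card + (B ∩ D).card) := by rw [h2]

lemma sum_chi (S : Finset (Fin n)) :
    ∑ C : Finset (Fin n), χ C S = if S = ∅ then (2 : ℝ) ^ n else 0 := by
  split_ifs with h
  · subst h
    simp only [χ, Finset.inter_empty, Finset.card_empty, pow_zero]
    rw [Finset.sum_const, Finset.card_univ, Fintype.card_finset, Fintype.card_fin]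
    simp
  · obtain ⟨a, ha⟩ := Finset.nonempty_iff_ne_empty.2 h
    refine Finset.sum_ninvolution (fun C => symmDiff {a} C) ?_ ?_ (fun _ => Finset.mem_univ _) ?_
    · intro C
      have h1 : ({a} : Finset (Fin n)) ∩ S = {a} := Finset.singleton_inter_of_mem ha
      have h2 : χ ({a} : Finset (Fin n)) S = -1 := by rw [χ, h1]; simp
      rw [chi_symmDiff, h2]; ring
    · intro C _ hC
      have hmem : ∀ x, x ∈ symmDiff ({a} : Finset (Fin n)) C ↔ x ∈ C := fun x => by rw [hC]
      have := (hmem a).symm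
      rw [Finset.mem_symmDiff] at this
      simp at this
    · intro C
      exact symmDiff_symmDiff_cancel_left _ _

lemma chi_image (π : Equiv.Perm (Fin n)) (C E : Finset (Fin n)) :
    χ (C.image π) E = χ C (E.image π.symm) := by
  have h1 : ((E.image π.symm).image π) = E := by
    rw [Finset.image_image]
    simp
  have h2 : (C ∩ E.image π.symm).image π = C.image π ∩ E := by
    rw [Finset.image_inter _ _ π.injective, h1]
  rw [χ, χ, ← h2, Finset.card_image_of_injective _ π.injective]

noncomputable def T (n : ℕ) : (Finset (Fin n) → ℝ) →ₗ[ℝ] (Finset (Fin n) → ℝ) where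
  toFun f := fun D => ∑ C, χ C D * f C
  map_add' f g := by funext D; simp [mul_add, Finset.sum_add_distrib]
  map_smul' r f := by funext D; simp [Finset.mul_sum, mul_left_comm]

lemma Tsingle (C : Finset (Fin n)) :
    T n (Pi.single C 1) = fun D => χ C D := by
  funext D
  show ∑ C', χ C' D * (Pi.single C 1 : Finset (Fin n) → ℝ) C' = χ C D
  simp [Pi.single_apply, mul_ite, Finset.sum_ite_eq']

lemma hsingle (w : Finset (Fin n) → ℝ) :
    ∑ C, w C • (Pi.single C 1 : Finset (Fin n) → ℝ) = w := by
  conv_rhs => rw [← Finset.univ_sum_single w]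
  refine Finset.sum_congr rfl fun C _ => ?_
  rw [← Pi.single_smul, smul_eq_mul, mul_one]

lemma TT (f : Finset (Fin n) → ℝ) : T n (T n f) = ((2 : ℝ) ^ n) • f := by
  funext D
  show ∑ C', χ C' D * ∑ C, χ C C' * f C = ((2 : ℝ) ^ n) • f D
  have hiff : ∀ C : Finset (Fin n), (symmDiff D C = ∅) ↔ (C = D) := fun C => by
    rw [← Finset.bot_eq_empty, symmDiff_eq_bot]; exact eq_comm
  calc ∑ C', χ C' D * ∑ C, χ C C' * f C
      = ∑ C', ∑ C, χ C' (symmDiff D C) * f C := by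
        refine Finset.sum_congr rfl fun C' _ => ?_
        rw [Finset.mul_sum]
        refine Finset.sum_congr rfl fun C _ => ?_
        rw [chi_comm C' (symmDiff D C), chi_symmDiff, chi_comm D C', chi_comm C C', mul_assoc]
    _ = ∑ C, (∑ C', χ C' (symmDiff D C)) * f C := by
        rw [Finset.sum_comm]
        simp [Finset.sum_mul]
    _ = ((2 : ℝ) ^ n) • f D := by
        simp only [sum_chi, hiff, ite_mul, zero_mul]
        rw [Finset.sum_ite_eq' Finset.univ D (fun C => (2:ℝ)^n * f C)]
        simp [smul_eq_mul]

lemma sgn_surj (a : Nn n) : ∃ A : Finset (Fin n), sgn A = a := by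
  refine ⟨Finset.univ.filter (fun i => Multiplicative.toAdd a i = 1), ?_⟩
  have hfun : (fun i => if i ∈ Finset.univ.filter (fun i => Multiplicative.toAdd a i = 1)
      then (1 : ZMod 2) else 0) = Multiplicative.toAdd a := by
    funext i
    by_cases h : Multiplicative.toAdd a i = 1
    · simp [h]
    · have h0 : Multiplicative.toAdd a i = 0 := by
        have h2 : ∀ x : ZMod 2, x = 0 ∨ x = 1 := by decide
        rcases h2 (Multiplicative.toAdd a i) with h' | h'
        · exact h'
        · exact absurd h' h
      simp [h, h0]
  rw [sgn, hfun]
  rfl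

end Stmt1Aux

/-- φ(s_C·Sₙ) = Σ_D (-1)^{|C∩D|} D is an isomorphism of Bₙ-representations from the
coset representation ℝ[Bₙ/Sₙ] (with basis the coset representatives s_C, C ⊆ {1,…,n},
on which s_A acts by s_A·(s_C Sₙ) = s_{A ∆ C} Sₙ and π acts by π·(s_C Sₙ) = s_{π(C)} Sₙ)
to the direct sum ⊕ᵢ Vₙⁱ (with basis all subsets D, graded by |D|, on which π·D = π(D)
and s_A·D = (-1)^{|A∩D|} D). -/
theorem stmt1 (n : ℕ)
    (ρW : Representation ℝ (Bn n) (Finset (Fin n) → ℝ))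
    (hWperm : ∀ (π : Equiv.Perm (Fin n)) (C : Finset (Fin n)),
      ρW (SemidirectProduct.inr π) (Pi.single C 1 : Finset (Fin n) → ℝ) =
        (Pi.single (C.image π) 1 : Finset (Fin n) → ℝ))
    (hWsgn : ∀ (A C : Finset (Fin n)),
      ρW (SemidirectProduct.inl (sgn A)) (Pi.single C 1 : Finset (Fin n) → ℝ) =
        (Pi.single (symmDiff A C) 1 : Finset (Fin n) → ℝ))
    (ρV : Representation ℝ (Bn n) (Finset (Fin n) → ℝ))
    (hVperm : ∀ (π : Equiv.Perm (Fin n)) (D : Finset (Fin n)),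
      ρV (SemidirectProduct.inr π) (Pi.single D 1 : Finset (Fin n) → ℝ) =
        (Pi.single (D.image π) 1 : Finset (Fin n) → ℝ))
    (hVsgn : ∀ (A D : Finset (Fin n)),
      ρV (SemidirectProduct.inl (sgn A)) (Pi.single D 1 : Finset (Fin n) → ℝ) =
        (-1 : ℝ) ^ ((A ∩ D).card) • (Pi.single D 1 : Finset (Fin n) → ℝ)) :
    ∃ φ : (Finset (Fin n) → ℝ) ≃ₗ[ℝ] (Finset (Fin n) → ℝ),
      (∀ C : Finset (Fin n),
        φ (Pi.single C 1 : Finset (Fin n) → ℝ) = fun D => (-1 : ℝ) ^ ((C ∩ D).card)) ∧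
      ∀ (g : Bn n) (w : Finset (Fin n) → ℝ), φ (ρW g w) = ρV g (φ w) := by
  classical
  open Stmt1Aux in
  have h2n : ((2 : ℝ) ^ n) ≠ 0 := by positivity
  have hcomp1 : (Stmt1Aux.T n) ∘ₗ (((2 : ℝ) ^ n)⁻¹ • Stmt1Aux.T n) = LinearMap.id := by
    apply LinearMap.ext; intro f
    simp only [LinearMap.comp_apply, LinearMap.smul_apply, map_smul, Stmt1Aux.TT,
      LinearMap.id_apply, smul_smul]
    rw [inv_mul_cancel₀ h2n, one_smul]
  have hcomp2 : (((2 : ℝ) ^ n)⁻¹ • Stmt1Aux.T n) ∘ₗ (Stmt1Aux.T n) = LinearMap.id := by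
    apply LinearMap.ext; intro f
    simp only [LinearMap.comp_apply, LinearMap.smul_apply, Stmt1Aux.TT,
      LinearMap.id_apply, smul_smul]
    rw [inv_mul_cancel₀ h2n, one_smul]
  refine ⟨LinearEquiv.ofLinear (Stmt1Aux.T n) (((2 : ℝ) ^ n)⁻¹ • Stmt1Aux.T n) hcomp1 hcomp2,
    ?_, ?_⟩
  · intro C
    simpa [Stmt1Aux.χ] using Stmt1Aux.Tsingle C
  · -- equivariance
    have Pof : ∀ g : Bn n,
        (∀ C, Stmt1Aux.T n (ρW g (Pi.single C 1)) = ρV g (Stmt1Aux.T n (Pi.single C 1))) →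
        ∀ w, Stmt1Aux.T n (ρW g w) = ρV g (Stmt1Aux.T n w) := by
      intro g hg w
      rw [← Stmt1Aux.hsingle w]
      calc Stmt1Aux.T n (ρW g (∑ C, w C • (Pi.single C 1 : Finset (Fin n) → ℝ)))
          = ∑ C, w C • Stmt1Aux.T n (ρW g (Pi.single C 1)) := by
            rw [map_sum, map_sum]; simp only [map_smul]
        _ = ∑ C, w C • ρV g (Stmt1Aux.T n (Pi.single C 1)) := by simp only [hg]
        _ = ρV g (Stmt1Aux.T n (∑ C, w C • (Pi.single C 1 : Finset (Fin n) → ℝ))) := by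
            rw [map_sum, map_sum]; simp only [map_smul]
    have hinl : ∀ a : Nn n, ∀ w,
        Stmt1Aux.T n (ρW (SemidirectProduct.inl a) w) =
          ρV (SemidirectProduct.inl a) (Stmt1Aux.T n w) := by
      intro a
      obtain ⟨A, rfl⟩ := Stmt1Aux.sgn_surj a
      refine Pof _ fun C => ?_
      rw [hWsgn, Stmt1Aux.Tsingle, Stmt1Aux.Tsingle]
      have hrhs : (fun D => Stmt1Aux.χ C D) =
          ∑ D, Stmt1Aux.χ C D • (Pi.single D 1 : Finset (Fin n) → ℝ) :=
        (Stmt1Aux.hsingle _).symm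
      rw [hrhs, map_sum]
      simp only [map_smul, hVsgn]
      have : ∀ D : Finset (Fin n),
          Stmt1Aux.χ C D • ((-1 : ℝ) ^ ((A ∩ D).card) • (Pi.single D 1 : Finset (Fin n) → ℝ)) =
            Stmt1Aux.χ (symmDiff A C) D • (Pi.single D 1 : Finset (Fin n) → ℝ) := by
        intro D
        rw [smul_smul, Stmt1Aux.chi_symmDiff]
        congr 1
        simp only [Stmt1Aux.χ]
        ring
      simp only [this]
      rw [Stmt1Aux.hsingle]
    have hinr : ∀ π : Equiv.Perm (Fin n), ∀ w,
        Stmt1Aux.T n (ρW (SemidirectProduct.inr π) w) =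
          ρV (SemidirectProduct.inr π) (Stmt1Aux.T n w) := by
      intro π
      refine Pof _ fun C => ?_
      rw [hWperm, Stmt1Aux.Tsingle, Stmt1Aux.Tsingle]
      have hrhs : (fun D => Stmt1Aux.χ C D) =
          ∑ D, Stmt1Aux.χ C D • (Pi.single D 1 : Finset (Fin n) → ℝ) :=
        (Stmt1Aux.hsingle _).symm
      rw [hrhs, map_sum]
      simp only [map_smul, hVperm]
      rw [show (∑ D, Stmt1Aux.χ C D • (Pi.single (D.image π) 1 : Finset (Fin n) → ℝ)) =
          ∑ E, Stmt1Aux.χ (C.image π) E • (Pi.single E 1 : Finset (Fin n) → ℝ) from ?_]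
      · rw [Stmt1Aux.hsingle]
      · refine Fintype.sum_equiv (Equiv.finsetCongr π) _ _ fun D => ?_
        have he : (Equiv.finsetCongr π) D = D.image π := by
          simp [Equiv.finsetCongr, Finset.map_eq_image]
        rw [he, Stmt1Aux.chi_image]
        congr 2
        rw [Finset.image_image]
        simp
    have key : ∀ g : Bn n, ∀ w,
        Stmt1Aux.T n (ρW g w) = ρV g (Stmt1Aux.T n w) := by
      intro g
      have hdecomp : SemidirectProduct.inl g.left * SemidirectProduct.inr g.right = g :=
        SemidirectProduct.inl_left_mul_inr_right g
      intro w
      rw [← hdecomp, map_mul, map_mul, Module.End.mul_apply, Module.End.mul_apply,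
        hinl g.left _, hinr g.right _]
    intro g w
    exact key g w
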